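/- Let X be a zero-dimensional (i.e. having a base of clopen sets) normal Hausdorff space and let H ∈ Δ_ω(X). Then the closure of H in the Čech–Stone compactification βX belongs to Δ_ω(βX). -/

import Mathlib

open Set Topology Filter

universe u v

/-- The hyperspace `𝓕(X)` of all nonempty closed subsets of a topological space `X`. -/
structure NEClosed (X : Type u) [TopologicalSpace X] : Type u where
  carrier : Set X
  nonempty' : carrier.Nonempty
  closed' : IsClosed carrier

namespace NEClosed

variable {X : Type u} [TopologicalSpace X]

/-- The basic Vietoris set `⟨𝒱⟩` determined by a family `𝒱` of subsets of `X`. -/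
def basicSet (𝒱 : Set (Set X)) : Set (NEClosed X) :=
  {S | S.carrier ⊆ ⋃₀ 𝒱 ∧ ∀ V ∈ 𝒱, (S.carrier ∩ V).Nonempty}

/-- The Vietoris topology on `𝓕(X)`, generated by the sets `⟨𝒱⟩` where `𝒱` runs over the
finite families of open subsets of `X`. -/
instance : TopologicalSpace (NEClosed X) :=
  TopologicalSpace.generateFrom
    {t | ∃ 𝒱 : Set (Set X), 𝒱.Finite ∧ (∀ V ∈ 𝒱, IsOpen V) ∧ t = basicSet 𝒱}

/-- The trace of a nonempty closed set `S` on a subspace `A` which it meets, as a nonempty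
closed subset of `A`. -/
def trace (S : NEClosed X) (A : Set X) (h : (S.carrier ∩ A).Nonempty) : NEClosed A where
  carrier := Subtype.val ⁻¹' S.carrier
  nonempty' := ⟨⟨h.choose, h.choose_spec.2⟩, h.choose_spec.1⟩
  closed' := S.closed'.preimage continuous_subtype_val

end NEClosed

/-- `f` is a Vietoris continuous selection for `𝓕(X)`. -/
def IsVSelection {X : Type u} [TopologicalSpace X] (f : NEClosed X → X) : Prop :=
  Continuous f ∧ ∀ S : NEClosed X, f S ∈ S.carrier

/-- `f` is a `p`-maximal selection: `f S = p` whenever `p ∈ S`. -/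
def PMaximal {X : Type u} [TopologicalSpace X] (f : NEClosed X → X) (p : X) : Prop :=
  ∀ S : NEClosed X, p ∈ S.carrier → f S = p

/-- `f` is a `p`-minimal selection: `f S ≠ p` whenever `S ≠ {p}`. -/
def PMinimal {X : Type u} [TopologicalSpace X] (f : NEClosed X → X) (p : X) : Prop :=
  ∀ S : NEClosed X, S.carrier ≠ {p} → f S ≠ p

/-- `H` is clopen modulo the point `p`: `H` is a nonempty closed set, `p ∈ H`, and
`H \ {p}` is open. -/
def ClopenModulo {X : Type u} [TopologicalSpace X] (H : Set X) (p : X) : Prop :=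
  H.Nonempty ∧ IsClosed H ∧ p ∈ H ∧ IsOpen (H \ {p})

/-- `Δ(X)`: the family of all nonempty closed subsets of `X` clopen modulo some point. -/
def DeltaSet (X : Type u) [TopologicalSpace X] : Set (Set X) :=
  {H | ∃ p, ClopenModulo H p}

/-- `Δ_ω(X)`: all `H ∈ Δ(X)` such that `H` is clopen, or `H` is clopen modulo a point `q`
at which `H` (with the subspace topology) has a countable neighbourhood base. -/
def DeltaOmegaSet (X : Type u) [TopologicalSpace X] : Set (Set X) :=
  {H | H ∈ DeltaSet X ∧ (IsClopen H ∨ ∃ q, ∃ hq : q ∈ H,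
    ClopenModulo H q ∧ (𝓝 (⟨q, hq⟩ : H)).IsCountablyGenerated)}

/-- The set `[V]_f = {x : f(Vᶜ ∪ {x}) = x}` for an open set `V`. -/
def bracketSel {X : Type u} [TopologicalSpace X] [T1Space X]
    (f : NEClosed X → X) (V : Set X) (hV : IsOpen V) : Set X :=
  {x | f ⟨Vᶜ ∪ {x}, ⟨x, Or.inr rfl⟩, hV.isClosed_compl.union isClosed_singleton⟩ = x}

/-- The set `⟨V⟩_f = [V]_f ∩ V` for an open set `V`. -/
def angleSel {X : Type u} [TopologicalSpace X] [T1Space X]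
    (f : NEClosed X → X) (V : Set X) (hV : IsOpen V) : Set X :=
  bracketSel f V hV ∩ V

/-- A quasi-ordinal decomposition of `X`: a continuous surjection onto a compact ordinal
space `[0, γ]` all of whose fibers are clopen modulo a point. -/
def IsQuasiOrdDecomp {X : Type u} [TopologicalSpace X] (γ : Ordinal.{u})
    (η : X → Set.Iic γ) : Prop :=
  Continuous η ∧ Function.Surjective η ∧ ∀ α : Set.Iic γ, η ⁻¹' {α} ∈ DeltaSet X

/-- An ordinal decomposition of `X`: a closed quotient map onto a compact ordinal space
`[0, γ]` all of whose fibers are clopen modulo a point. -/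
def IsOrdDecomp {X : Type u} [TopologicalSpace X] (γ : Ordinal.{u})
    (η : X → Set.Iic γ) : Prop :=
  IsQuotientMap η ∧ IsClosedMap η ∧ ∀ α : Set.Iic γ, η ⁻¹' {α} ∈ DeltaSet X


section Aux

variable {X : Type u} [TopologicalSpace X]

/-- Extend a `[0,1]`-valued continuous function to the Stone–Čech compactification. -/
lemma exists_stoneCech_extension_Icc (h : X → ℝ) (hc : Continuous h)
    (h01 : ∀ x, h x ∈ Icc (0:ℝ) 1) :
    ∃ F : StoneCech X → ℝ, Continuous F ∧ ∀ x, F (stoneCechUnit x) = h x := by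
  let h' : X → Icc (0:ℝ) 1 := fun x => ⟨h x, h01 x⟩
  have hc' : Continuous h' := hc.subtype_mk _
  refine ⟨Subtype.val ∘ stoneCechExtend hc',
    continuous_subtype_val.comp (continuous_stoneCechExtend hc'), fun x => ?_⟩
  have := congrFun (stoneCechExtend_extends hc') x
  simp only [Function.comp_apply] at this ⊢
  rw [this]

/-- Key separation lemma: in a normal space, β-closures of closed sets intersect inside
the β-closure of the intersection. -/
lemma closure_image_inter [T2Space X] [NormalSpace X] {A B : Set X}
    (hA : IsClosed A) (hB : IsClosed B) :
    closure (stoneCechUnit '' A) ∩ closure (stoneCechUnit '' B) ⊆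
      closure (stoneCechUnit '' (A ∩ B)) := by
  intro z hz
  by_contra hzc
  obtain ⟨f, hf0, hf1, hf01⟩ := exists_continuous_zero_one_of_isClosed
    (isClosed_singleton (x := z)) isClosed_closure (disjoint_singleton_left.2 hzc)
  set g : X → ℝ := fun x => f (stoneCechUnit x) with hg
  have hgc : Continuous g := f.continuous.comp continuous_stoneCechUnit
  set A₀ := A ∩ g ⁻¹' (Iic (1/2:ℝ)) with hA₀def
  set B₀ := B ∩ g ⁻¹' (Iic (1/2:ℝ)) with hB₀def
  have hA₀ : IsClosed A₀ := hA.inter (isClosed_Iic.preimage hgc)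
  have hB₀ : IsClosed B₀ := hB.inter (isClosed_Iic.preimage hgc)
  have hdisj : Disjoint A₀ B₀ := by
    rw [Set.disjoint_left]
    rintro x ⟨hxA, hx2⟩ ⟨hxB, -⟩
    have h1 : g x = 1 := hf1 (subset_closure (mem_image_of_mem _ ⟨hxA, hxB⟩))
    simp only [mem_preimage, mem_Iic] at hx2
    rw [h1] at hx2; linarith
  obtain ⟨h, hh0, hh1, hh01⟩ := exists_continuous_zero_one_of_isClosed hA₀ hB₀ hdisj
  obtain ⟨F, hFc, hFu⟩ := exists_stoneCech_extension_Icc h h.continuous hh01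
  have hWopen : IsOpen (f ⁻¹' (Iio (1/2:ℝ))) := isOpen_Iio.preimage f.continuous
  have hzW : z ∈ f ⁻¹' (Iio (1/2:ℝ)) := by
    have h0 : f z = 0 := hf0 rfl
    simp only [mem_preimage, mem_Iio, h0]; norm_num
  have step : ∀ (T T₀ : Set X), T₀ = T ∩ g ⁻¹' (Iic (1/2:ℝ)) →
      z ∈ closure (stoneCechUnit '' T) → z ∈ closure (stoneCechUnit '' T₀) := by
    rintro T T₀ rfl hzT
    have h2 := hWopen.inter_closure (⟨hzW, hzT⟩ :
      z ∈ f ⁻¹' (Iio (1/2:ℝ)) ∩ closure (stoneCechUnit '' T))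
    refine closure_mono ?_ h2
    rintro w ⟨hw1, a, haA, rfl⟩
    refine mem_image_of_mem _ ⟨haA, ?_⟩
    simp only [mem_preimage, mem_Iio] at hw1
    show g a ≤ 1/2
    exact le_of_lt hw1
  have hzA0 : z ∈ closure (stoneCechUnit '' A₀) := step A A₀ hA₀def hz.1
  have hzB0 : z ∈ closure (stoneCechUnit '' B₀) := step B B₀ hB₀def hz.2
  have hF0 : F z = 0 := by
    have hmem : F z ∈ closure ({0} : Set ℝ) := by
      refine map_mem_closure hFc hzA0 ?_
      rintro w ⟨a, ha, rfl⟩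
      rw [hFu]
      exact hh0 ha
    simpa using hmem
  have hF1 : F z = 1 := by
    have hmem : F z ∈ closure ({1} : Set ℝ) := by
      refine map_mem_closure hFc hzB0 ?_
      rintro w ⟨a, ha, rfl⟩
      rw [hFu]
      exact hh1 ha
    simpa using hmem
  rw [hF0] at hF1; norm_num at hF1

lemma closure_image_clopen [T2Space X] [NormalSpace X] {K : Set X} (hK : IsClopen K) :
    IsClopen (closure (stoneCechUnit '' K)) ∧
      closure (stoneCechUnit '' K) ∩ closure (stoneCechUnit '' Kᶜ) = ∅ := by
  have hdis : closure (stoneCechUnit '' K) ∩ closure (stoneCechUnit '' Kᶜ) = ∅ := by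
    have := closure_image_inter (X := X) hK.1 hK.compl.1
    rw [inter_compl_self, image_empty, closure_empty] at this
    exact eq_empty_iff_forall_notMem.2 fun x hx => this hx
  have huniv : closure (stoneCechUnit '' K) ∪ closure (stoneCechUnit '' Kᶜ) = univ := by
    rw [← closure_union, ← image_union, union_compl_self, image_univ]
    exact denseRange_stoneCechUnit.closure_eq
  refine ⟨⟨isClosed_closure, ?_⟩, hdis⟩
  have heq : closure (stoneCechUnit '' K) = (closure (stoneCechUnit '' Kᶜ))ᶜ := by
    apply subset_antisymm
    · intro x hx hx2
      exact eq_empty_iff_forall_notMem.1 hdis x ⟨hx, hx2⟩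
    · intro x hx
      rcases eq_univ_iff_forall.1 huniv x with h | h
      · exact h
      · exact absurd h hx
  rw [heq]
  exact isClosed_closure.isOpen_compl

lemma closure_image_diff_singleton [T2Space X] [NormalSpace X] {H : Set X} {q : X}
    (hcm : ClopenModulo H q) :
    closure (stoneCechUnit '' H) \ {stoneCechUnit q} =
      (closure (stoneCechUnit '' (Hᶜ ∪ {q})))ᶜ := by
  obtain ⟨-, hHcl, hqH, hHo⟩ := hcm
  have hBcl : IsClosed (Hᶜ ∪ {q}) := by
    rw [← isOpen_compl_iff]
    have : (Hᶜ ∪ {q})ᶜ = H \ {q} := by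
      ext x; simp [Set.diff_eq, and_comm]
    rw [this]; exact hHo
  have hAB : H ∩ (Hᶜ ∪ {q}) = {q} := by
    ext x
    constructor
    · rintro ⟨hxH, hx⟩
      rcases hx with hx | hx
      · exact absurd hxH hx
      · exact hx
    · rintro rfl
      exact ⟨hqH, Or.inr rfl⟩
  have hinter : closure (stoneCechUnit '' H) ∩ closure (stoneCechUnit '' (Hᶜ ∪ {q})) ⊆
      {stoneCechUnit q} := by
    refine (closure_image_inter hHcl hBcl).trans ?_
    rw [hAB, image_singleton, closure_singleton]
  have huniv : closure (stoneCechUnit '' H) ∪ closure (stoneCechUnit '' (Hᶜ ∪ {q})) = univ := by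
    rw [← closure_union, ← image_union]
    have : H ∪ (Hᶜ ∪ {q}) = univ := by
      rw [eq_univ_iff_forall]
      intro x
      by_cases hx : x ∈ H
      · exact Or.inl hx
      · exact Or.inr (Or.inl hx)
    rw [this, image_univ]
    exact denseRange_stoneCechUnit.closure_eq
  ext z
  constructor
  · rintro ⟨hzH, hzq⟩ hzB
    exact hzq (hinter ⟨hzH, hzB⟩)
  · intro hzB
    have hzH : z ∈ closure (stoneCechUnit '' H) := by
      rcases (eq_univ_iff_forall.1 huniv z) with h | h
      · exact h
      · exact absurd h hzB
    refine ⟨hzH, fun hzq => hzB ?_⟩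
    rw [mem_singleton_iff] at hzq
    rw [hzq]
    exact subset_closure (mem_image_of_mem _ (Or.inr rfl))

end Aux

/-- If `X` is a zero-dimensional normal Hausdorff space and `H ∈ Δ_ω(X)`, then the closure of
(the image of) `H` in the Čech–Stone compactification `βX` belongs to `Δ_ω(βX)`. -/
theorem stmt_18 {X : Type u} [TopologicalSpace X] [T2Space X] [NormalSpace X]
    (hzd : ∀ (x : X) (V : Set X), IsOpen V → x ∈ V → ∃ U : Set X, IsClopen U ∧ x ∈ U ∧ U ⊆ V)
    (H : Set X) (hH : H ∈ DeltaOmegaSet X) :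
    closure (stoneCechUnit '' H) ∈ DeltaOmegaSet (StoneCech X) := by
  obtain ⟨⟨p₀, hcm₀⟩, hor⟩ := hH
  obtain ⟨x₀, hx₀⟩ := hcm₀.1
  have hHcl : IsClosed H := hcm₀.2.1
  have hSne : (closure (stoneCechUnit '' H)).Nonempty :=
    ⟨_, subset_closure (mem_image_of_mem _ hx₀)⟩
  rcases hor with hclopen | ⟨q, hq, hcm, hcg⟩
  · -- clopen case
    have hcl := (closure_image_clopen hclopen).1
    refine ⟨⟨stoneCechUnit x₀, hSne, isClosed_closure,
      subset_closure (mem_image_of_mem _ hx₀), ?_⟩, Or.inl hcl⟩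
    rw [Set.diff_eq]
    exact hcl.2.inter isClosed_singleton.isOpen_compl
  · -- countable character case
    set S := closure (stoneCechUnit '' H) with hSdef
    set P := stoneCechUnit q with hPdef
    have hPS : P ∈ S := subset_closure (mem_image_of_mem _ hq)
    have hdiffO : IsOpen (S \ {P}) := by
      rw [hSdef, hPdef, closure_image_diff_singleton hcm]
      exact isClosed_closure.isOpen_compl
    have hcmS : ClopenModulo S P := ⟨hSne, isClosed_closure, hPS, hdiffO⟩
    refine ⟨⟨P, hcmS⟩, Or.inr ⟨P, hPS, hcmS, ?_⟩⟩
    have := hcg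
    obtain ⟨s, hs⟩ := Filter.exists_antitone_basis (𝓝 (⟨q, hq⟩ : H))
    -- choose clopen sets C n around q inside the basic neighbourhoods
    have hchoose : ∀ n : ℕ, ∃ C : Set X, IsClopen C ∧ q ∈ C ∧
        ∀ y, ∀ hy : y ∈ H, y ∈ C → (⟨y, hy⟩ : H) ∈ s n := by
      intro n
      have hsn : s n ∈ 𝓝 (⟨q, hq⟩ : H) := hs.toHasBasis.mem_of_mem trivial
      rw [nhds_subtype] at hsn
      obtain ⟨t, htm, hts⟩ := hsn
      obtain ⟨U, hUt, hUo, hqU⟩ := mem_nhds_iff.1 htm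
      obtain ⟨C, hCclopen, hqC, hCU⟩ := hzd q U hUo hqU
      exact ⟨C, hCclopen, hqC, fun y hy hyC => hts (hUt (hCU hyC))⟩
    choose C hCclopen hqC hCs using hchoose
    set E : ℕ → Set X := fun n => ⋂ i ∈ Finset.range (n + 1), C i with hEdef
    have hEclopen : ∀ n, IsClopen (E n) := fun n =>
      isClopen_biInter_finset fun i _ => hCclopen i
    have hqE : ∀ n, q ∈ E n := fun n => mem_iInter₂.2 fun i _ => hqC i
    have hE_subset : ∀ n, E n ⊆ C n := fun n =>
      biInter_subset_of_mem (Finset.mem_range.2 n.lt_succ_self)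
    have hEanti : ∀ m n, m ≤ n → E n ⊆ E m := by
      intro m n hmn x hx
      rw [mem_iInter₂] at hx ⊢
      intro i hi
      exact hx i (Finset.mem_range.2 (lt_of_lt_of_le (Finset.mem_range.1 hi) (by omega)))
    set K : ℕ → Set X := fun n => H ∩ (E n)ᶜ with hKdef
    have hKclopen : ∀ n, IsClopen (K n) := by
      intro n
      refine ⟨hHcl.inter (hEclopen n).2.isClosed_compl, ?_⟩
      have : K n = (H \ {q}) ∩ (E n)ᶜ := by
        ext x
        constructor
        · rintro ⟨hxH, hxE⟩
          exact ⟨⟨hxH, fun hxq => hxE (mem_singleton_iff.1 hxq ▸ hqE n)⟩, hxE⟩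
        · rintro ⟨⟨hxH, -⟩, hxE⟩
          exact ⟨hxH, hxE⟩
      rw [this]
      exact hcm.2.2.2.inter (hEclopen n).1.isOpen_compl
    set V : ℕ → Set X := fun n => H ∩ E n with hVdef
    have hVK : ∀ n, V n ∪ K n = H := fun n => inter_union_compl H (E n)
    have hVanti : ∀ n, V (n + 1) ⊆ V n := fun n =>
      inter_subset_inter_right H (hEanti n (n + 1) (by omega))
    have hVs : ∀ n, ∀ y, y ∈ V n → ∀ hy : y ∈ H, (⟨y, hy⟩ : H) ∈ s n :=
      fun n y hy hyH => hCs n y hyH (hE_subset n hy.2)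
    have hKcl : ∀ n, IsClopen (closure (stoneCechUnit '' K n)) := fun n =>
      (closure_image_clopen (hKclopen n)).1
    have hPK : ∀ n, P ∉ closure (stoneCechUnit '' K n) := by
      intro n hPmem
      have hdis := (closure_image_clopen (hKclopen n)).2
      have hPc : P ∈ closure (stoneCechUnit '' (K n)ᶜ) := by
        refine subset_closure (mem_image_of_mem _ ?_)
        intro hqK
        exact hqK.2 (hqE n)
      exact eq_empty_iff_forall_notMem.1 hdis P ⟨hPmem, hPc⟩
    have hScover : ∀ n, S ⊆ closure (stoneCechUnit '' V n) ∪ closure (stoneCechUnit '' K n) := by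
      intro n
      rw [← closure_union, ← image_union, hVK n]
    -- the filter of neighbourhoods of P within S has a countable basis
    have key : (𝓝[S] P).HasBasis (fun _ : ℕ => True)
        (fun n => (closure (stoneCechUnit '' K n))ᶜ ∩ S) := by
      constructor
      intro t
      simp only [true_and]
      constructor
      · intro ht
        obtain ⟨w, hwo, hPw, hwt⟩ := mem_nhdsWithin.1 ht
        by_contra hcon
        push_neg at hcon
        have hne' : ∀ n, (closure (stoneCechUnit '' V n) ∩ (wᶜ ∩ S)).Nonempty := by
          intro n
          obtain ⟨z, hz, hzt⟩ := not_subset.1 (hcon n)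
          refine ⟨z, ?_, ?_, hz.2⟩
          · rcases hScover n hz.2 with h | h
            · exact h
            · exact absurd h hz.1
          · intro hzw
            exact hzt (hwt ⟨hzw, hz.2⟩)
        set G : ℕ → Set (StoneCech X) :=
          fun n => closure (stoneCechUnit '' V n) ∩ (wᶜ ∩ S) with hGdef
        have hGclosed : ∀ n, IsClosed (G n) := fun n =>
          isClosed_closure.inter (hwo.isClosed_compl.inter isClosed_closure)
        have hGanti : ∀ n, G (n + 1) ⊆ G n := fun n =>
          inter_subset_inter_left _ (closure_mono (image_mono (hVanti n)))
        obtain ⟨z, hz⟩ := IsCompact.nonempty_iInter_of_sequence_nonempty_isCompact_isClosed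
          G hGanti hne' (hGclosed 0).isCompact hGclosed
        rw [mem_iInter] at hz
        have hzP : z ≠ P := fun h => (hz 0).2.1 (h ▸ hPw)
        obtain ⟨f, hf0, hf1, -⟩ := exists_continuous_zero_one_of_isClosed
          (isClosed_singleton (x := P)) (isClosed_singleton (x := z))
          (by simp [hzP, Ne.symm hzP])
        have hmem : (Subtype.val ⁻¹' ((fun x => f (stoneCechUnit x)) ⁻¹' (Iio (1/2:ℝ)))
            : Set H) ∈ 𝓝 (⟨q, hq⟩ : H) := by
          rw [nhds_subtype]
          refine preimage_mem_comap ?_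
          refine IsOpen.mem_nhds (isOpen_Iio.preimage (f.continuous.comp
            continuous_stoneCechUnit)) ?_
          have h0 : f P = 0 := hf0 rfl
          simp only [mem_preimage, mem_Iio, ← hPdef, h0]
          norm_num
        obtain ⟨m, -, hm⟩ := hs.toHasBasis.mem_iff.1 hmem
        have hsub : stoneCechUnit '' V m ⊆ f ⁻¹' (Iic (1/2:ℝ)) := by
          rintro - ⟨y, hy, rfl⟩
          have := hm (hVs m y hy hy.1)
          simp only [mem_preimage, mem_Iio] at this
          exact le_of_lt this
        have hzle : f z ≤ 1/2 :=
          closure_minimal hsub (isClosed_Iic.preimage f.continuous) (hz m).1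
        have hz1 : f z = 1 := hf1 rfl
        rw [hz1] at hzle
        norm_num at hzle
      · rintro ⟨n, hn⟩
        exact mem_nhdsWithin.2
          ⟨(closure (stoneCechUnit '' K n))ᶜ, isClosed_closure.isOpen_compl, hPK n, hn⟩
    have hcg' : (𝓝[S] P).IsCountablyGenerated := key.isCountablyGenerated
    rw [nhds_subtype_eq_comap_nhdsWithin]
    exact Filter.comap.isCountablyGenerated _ _
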